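/- (Approximation) Let (X, M) be a supermidpoint set with associated binary operation m(x,y) = M(x,y,y,y,…), and write m₀(x) = x and mₙ(x₀, …, xₙ) = m(x₀, m_{n-1}(x₁, …, xₙ)) for n ≥ 1. Then the following are equivalent: (1) m is cancellative, i.e. m(x,y) = m(x,z) implies y = z; (2) X satisfies the approximation property: for all sequences (xᵢ), (yᵢ), (zᵢ), (wᵢ) in X, if for every n ≥ 0 it holds that mₙ(x₀, …, x_{n-1}, zₙ) = mₙ(y₀, …, y_{n-1}, wₙ), then M(x₀, x₁, x₂, …) = M(y₀, y₁, y₂, …). -/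

import Mathlib

/-- A midpoint operation: idempotent, commutative, satisfying transposition. -/
def IsMidpoint {A : Type} (m : A → A → A) : Prop :=
  (∀ x, m x x = x) ∧ (∀ x y, m x y = m y x) ∧
    (∀ x y z w, m (m x y) (m z w) = m (m x z) (m y w))

/-- Cancellation: `m x y = m x z` implies `y = z`. -/
def Cancellative {A : Type} (m : A → A → A) : Prop :=
  ∀ x y z, m x y = m x z → y = z

/-- Iterativity in the category of sets. -/
def Iterative {A : Type} (m : A → A → A) : Prop :=
  ∀ (X : Type) (c : X → A × X), ∃! u : X → A, ∀ x, u x = m (c x).1 (u (c x).2)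

/-- The unfolding property of an infinitary operation `M` with respect to `m`. -/
def Unfolding {A : Type} (m : A → A → A) (M : (ℕ → A) → A) : Prop :=
  ∀ x : ℕ → A, M x = m (x 0) (M fun i => x (i + 1))

/-- The canonicity property of an infinitary operation `M` with respect to `m`. -/
def Canonicity {A : Type} (m : A → A → A) (M : (ℕ → A) → A) : Prop :=
  ∀ x y : ℕ → A, (∀ i, y i = m (x i) (y (i + 1))) → y 0 = M x

/-- A supermidpoint structure on `A`: an infinitary operation satisfying
idempotency, commutativity, transposition and unfolding. -/
structure SupermidpointStr (A : Type) where
  M : (ℕ → A) → A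
  idem : ∀ x : A, M (fun _ => x) = x
  comm : ∀ x y : A, M (fun i => if i = 0 then x else y) = M (fun i => if i = 0 then y else x)
  transp : ∀ x : ℕ → ℕ → A,
    M (fun i => M (fun j => x i j)) = M (fun j => M (fun i => x i j))
  unfoldAx : ∀ x : ℕ → A,
    M x = M (fun i => if i = 0 then x 0 else M (fun j => x (j + 1)))

/-- The binary operation associated with a supermidpoint structure:
`m(x,y) = M(x,y,y,y,…)`. -/
def SupermidpointStr.mid {A : Type} (S : SupermidpointStr A) (x y : A) : A :=
  S.M (fun i => if i = 0 then x else y)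

/-- The derived `(n+1)`-ary midpoint operations: `m₀(x) = x` and
`mₙ(x₀,…,xₙ) = m(x₀, m_{n-1}(x₁,…,xₙ))`, applied to the first `n+1`
entries of a sequence. -/
def mfold {A : Type} (m : A → A → A) : ℕ → (ℕ → A) → A
  | 0, x => x 0
  | n + 1, x => m (x 0) (mfold m n fun i => x (i + 1))

namespace SupermidpointStr

variable {A : Type} (S : SupermidpointStr A)

lemma mid_idem (a : A) : S.mid a a = a := by
  have h : (fun i : ℕ => if i = 0 then a else a) = fun _ : ℕ => a := by
    funext i; split <;> rfl
  show S.M (fun i : ℕ => if i = 0 then a else a) = a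
  rw [h, S.idem]

lemma mid_comm (a b : A) : S.mid a b = S.mid b a := S.comm a b

lemma unfold_eq (p : ℕ → A) : S.M p = S.mid (p 0) (S.M fun i => p (i + 1)) :=
  S.unfoldAx p

lemma hom (p q : ℕ → A) :
    S.M (fun i => S.mid (p i) (q i)) = S.mid (S.M p) (S.M q) := by
  have h := S.transp (fun i j => if j = 0 then p i else q i)
  have h2 : (fun j => S.M (fun i => if j = 0 then p i else q i))
      = fun j => if j = 0 then S.M p else S.M q := by
    funext j
    by_cases hj : j = 0 <;> simp [hj]
  rw [h2] at h
  exact h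

lemma medial (a b c d : A) :
    S.mid (S.mid a b) (S.mid c d) = S.mid (S.mid a c) (S.mid b d) := by
  have h := S.hom (fun i => if i = 0 then a else b) (fun i => if i = 0 then c else d)
  have h1 : (fun i : ℕ => S.mid (if i = 0 then a else b) (if i = 0 then c else d))
      = fun i : ℕ => if i = 0 then S.mid a c else S.mid b d := by
    funext i; by_cases hi : i = 0 <;> simp [hi]
  rw [h1] at h
  exact h.symm

lemma distrib (a b c : A) :
    S.mid a (S.mid b c) = S.mid (S.mid a b) (S.mid a c) := by
  calc S.mid a (S.mid b c) = S.mid (S.mid a a) (S.mid b c) := by rw [S.mid_idem]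
    _ = S.mid (S.mid a b) (S.mid a c) := S.medial a a b c

end SupermidpointStr

/-- `mfold` only depends on the first `n+1` values. -/
lemma mfold_congr {A : Type} (m : A → A → A) :
    ∀ (n : ℕ) (s t : ℕ → A), (∀ i ≤ n, s i = t i) → mfold m n s = mfold m n t := by
  intro n
  induction n with
  | zero => intro s t h; exact h 0 (le_refl 0)
  | succ n ih =>
    intro s t h
    simp only [mfold]
    rw [h 0 (Nat.zero_le _), ih _ _ (fun i hi => h (i + 1) (by omega))]

/-- Pull the last entry of an `mfold` into the previous one. -/
lemma mfold_succ {A : Type} (m : A → A → A) :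
    ∀ (n : ℕ) (s : ℕ → A), mfold m (n + 1) s
      = mfold m n (fun i => if i < n then s i else m (s n) (s (n + 1))) := by
  intro n
  induction n with
  | zero =>
    intro s
    simp [mfold]
  | succ n ih =>
    intro s
    have h : mfold m (n + 1 + 1) s = m (s 0) (mfold m (n + 1) (fun i => s (i + 1))) := rfl
    rw [h, ih (fun i => s (i + 1))]
    have h2 : mfold m (n + 1) (fun i => if i < n + 1 then s i else m (s (n + 1)) (s (n + 1 + 1)))
        = m ((fun i => if i < n + 1 then s i else m (s (n + 1)) (s (n + 1 + 1))) 0)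
          (mfold m n fun i =>
            (fun i => if i < n + 1 then s i else m (s (n + 1)) (s (n + 1 + 1))) (i + 1)) := rfl
    rw [h2]
    congr 1
    · simp

namespace SupermidpointStr

variable {A : Type} (S : SupermidpointStr A)

/-- Generalized medial law for folds. -/
lemma mfold_mid : ∀ (n : ℕ) (s t : ℕ → A),
    S.mid (mfold S.mid n s) (mfold S.mid n t)
      = mfold S.mid n (fun i => S.mid (s i) (t i)) := by
  intro n
  induction n with
  | zero => intro s t; rfl
  | succ n ih =>
    intro s t
    show S.mid (S.mid (s 0) (mfold S.mid n fun i => s (i + 1)))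
        (S.mid (t 0) (mfold S.mid n fun i => t (i + 1)))
      = S.mid (S.mid (s 0) (t 0)) (mfold S.mid n fun i => S.mid (s (i + 1)) (t (i + 1)))
    rw [S.medial, ih]

/-- Cancellation of a common prefix of a fold. -/
lemma mfold_cancel (hc : Cancellative S.mid) :
    ∀ (n : ℕ) (s t : ℕ → A), (∀ i < n, s i = t i) →
      mfold S.mid n s = mfold S.mid n t → s n = t n := by
  intro n
  induction n with
  | zero => intro s t _ h; exact h
  | succ n ih =>
    intro s t hpre h
    simp only [mfold] at h
    rw [hpre 0 (Nat.succ_pos n)] at h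
    have h2 := hc _ _ _ h
    exact ih _ _ (fun i hi => hpre (i + 1) (by omega)) h2

/-- Key combination lemma. -/
lemma helper (p q : ℕ → A) (c d : A) (n : ℕ) :
    mfold S.mid n (fun i => if i < n then S.mid (p i) (q i) else S.mid (S.mid (p n) c) d)
      = S.mid (mfold S.mid (n + 1) (fun i => if i < n + 1 then p i else c))
          (mfold S.mid n (fun i => if i < n then q i else d)) := by
  rw [mfold_succ, S.mfold_mid]
  apply mfold_congr
  intro i hi
  by_cases hlt : i < n
  · simp [hlt, Nat.lt_succ_of_lt hlt]
  · have hin : i = n := by omega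
    subst hin
    simp [Nat.lt_irrefl, Nat.lt_succ_self]

end SupermidpointStr

/-- Approximation: for a supermidpoint set, cancellativity of the associated
binary operation is equivalent to the approximation property. -/
theorem cancellative_iff_approximation (A : Type) (S : SupermidpointStr A) :
    Cancellative S.mid ↔
      ∀ x y z w : ℕ → A,
        (∀ n, mfold S.mid n (fun i => if i < n then x i else z n) =
              mfold S.mid n (fun i => if i < n then y i else w n)) →
        S.M x = S.M y := by
  constructor
  · intro hc x y z w hyp
    have hcr : ∀ r p q : A, S.mid p r = S.mid q r → p = q := by
      intro r p q h
      exact hc r p q (by rwa [S.mid_comm r p, S.mid_comm r q])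
    have hz0 : z 0 = w 0 := by simpa [mfold] using hyp 0
    -- the crossed-tails identity
    have star : ∀ n, S.mid (S.mid (x n) (z (n + 1))) (w n)
        = S.mid (S.mid (y n) (w (n + 1))) (z n) := by
      intro n
      have key : mfold S.mid n
            (fun i => if i < n then S.mid (x i) (y i)
              else S.mid (S.mid (x n) (z (n + 1))) (w n))
          = mfold S.mid n
            (fun i => if i < n then S.mid (y i) (x i)
              else S.mid (S.mid (y n) (w (n + 1))) (z n)) := by
        rw [S.helper x y (z (n + 1)) (w n) n, S.helper y x (w (n + 1)) (z n) n,
          hyp (n + 1), hyp n]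
      have h2 := S.mfold_cancel hc n _ _
        (fun i hi => by simp [hi, S.mid_comm]) key
      simpa using h2
    have hfun : (fun n => S.mid (S.mid (x n) (z (n + 1))) (w n))
        = fun n => S.mid (S.mid (y n) (w (n + 1))) (z n) := funext star
    have hA : S.M (fun n => S.mid (x n) (z (n + 1)))
        = S.mid (S.M x) (S.M fun n => z (n + 1)) := S.hom x (fun n => z (n + 1))
    have hB : S.M (fun n => S.mid (y n) (w (n + 1)))
        = S.mid (S.M y) (S.M fun n => w (n + 1)) := S.hom y (fun n => w (n + 1))
    have e1 : S.M (fun n => S.mid (S.mid (x n) (z (n + 1))) (w n))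
        = S.mid (S.mid (S.M x) (S.M fun n => z (n + 1))) (S.M w) := by
      have h := S.hom (fun n => S.mid (x n) (z (n + 1))) w
      rw [hA] at h
      exact h
    have e2 : S.M (fun n => S.mid (S.mid (y n) (w (n + 1))) (z n))
        = S.mid (S.mid (S.M y) (S.M fun n => w (n + 1))) (S.M z) := by
      have h := S.hom (fun n => S.mid (y n) (w (n + 1))) z
      rw [hB] at h
      exact h
    have EQ : S.mid (S.mid (S.M x) (S.M fun n => z (n + 1))) (S.M w)
        = S.mid (S.mid (S.M y) (S.M fun n => w (n + 1))) (S.M z) := by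
      rw [← e1, hfun, e2]
    rw [S.unfold_eq w, S.unfold_eq z] at EQ
    rw [S.medial (S.M x) (S.M fun n => z (n + 1)) (w 0) (S.M fun i => w (i + 1)),
      S.medial (S.M y) (S.M fun n => w (n + 1)) (z 0) (S.M fun i => z (i + 1))] at EQ
    rw [S.mid_comm (S.M fun n => w (n + 1)) (S.M fun i => z (i + 1))] at EQ
    have step1 : S.mid (S.M x) (w 0) = S.mid (S.M y) (z 0) := hcr _ _ _ EQ
    rw [hz0] at step1
    exact hcr _ _ _ step1
  · intro hap c u v h
    have hbase : S.mid u c = S.mid v c := by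
      calc S.mid u c = S.mid c u := S.mid_comm u c
        _ = S.mid c v := h
        _ = S.mid v c := S.mid_comm c v
    have hg : ∀ s, S.mid u s = S.mid v s → ∀ r, S.mid u (S.mid r s) = S.mid v (S.mid r s) := by
      intro s hs r
      calc S.mid u (S.mid r s) = S.mid (S.mid u r) (S.mid u s) := S.distrib u r s
        _ = S.mid (S.mid u r) (S.mid v s) := by rw [hs]
        _ = S.mid (S.mid u v) (S.mid r s) := S.medial u r v s
        _ = S.mid (S.mid v u) (S.mid r s) := by rw [S.mid_comm u v]
        _ = S.mid (S.mid v r) (S.mid u s) := S.medial v u r s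
        _ = S.mid (S.mid v r) (S.mid v s) := by rw [hs]
        _ = S.mid v (S.mid r s) := (S.distrib v r s).symm
    have hshift : ∀ (a : A) (n : ℕ),
        (fun i => if i + 1 < n + 1 then a else c) = fun i => if i < n then a else c := by
      intro a n; funext i; simp [Nat.succ_lt_succ_iff]
    have stepu : ∀ (a : A) (n : ℕ),
        mfold S.mid (n + 1) (fun i => if i < n + 1 then a else c)
          = S.mid a (mfold S.mid n (fun i => if i < n then a else c)) := by
      intro a n
      show S.mid (if 0 < n + 1 then a else c)
          (mfold S.mid n fun i => if i + 1 < n + 1 then a else c)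
        = S.mid a (mfold S.mid n (fun i => if i < n then a else c))
      rw [if_pos (Nat.succ_pos n), hshift a n]
    have main : ∀ n : ℕ,
        mfold S.mid (n + 1) (fun i => if i < n + 1 then u else c)
          = mfold S.mid (n + 1) (fun i => if i < n + 1 then v else c)
        ∧ S.mid u (mfold S.mid (n + 1) (fun i => if i < n + 1 then u else c))
          = S.mid v (mfold S.mid (n + 1) (fun i => if i < n + 1 then u else c)) := by
      intro n
      induction n with
      | zero =>
        have h0u : mfold S.mid 1 (fun i => if i < 1 then u else c) = S.mid u c := by
          rw [stepu u 0]
          show S.mid u (if 0 < 0 then u else c) = S.mid u c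
          rw [if_neg (lt_irrefl 0)]
        have h0v : mfold S.mid 1 (fun i => if i < 1 then v else c) = S.mid v c := by
          rw [stepu v 0]
          show S.mid v (if 0 < 0 then v else c) = S.mid v c
          rw [if_neg (lt_irrefl 0)]
        constructor
        · rw [h0u, h0v, hbase]
        · rw [h0u]
          calc S.mid u (S.mid u c) = S.mid u (S.mid v c) := by rw [hbase]
            _ = S.mid (S.mid u v) (S.mid u c) := S.distrib u v c
            _ = S.mid (S.mid v u) (S.mid v c) := by rw [S.mid_comm u v, hbase]
            _ = S.mid v (S.mid u c) := (S.distrib v u c).symm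
      | succ n ih =>
        have hsu := stepu u (n + 1)
        have hsv := stepu v (n + 1)
        constructor
        · rw [hsu, hsv, ← ih.1]
          exact ih.2
        · rw [hsu]
          exact hg _ ih.2 u
    have key : ∀ n, mfold S.mid n (fun i => if i < n then u else c)
        = mfold S.mid n (fun i => if i < n then v else c) := by
      intro n
      cases n with
      | zero => simp [mfold]
      | succ n => exact (main n).1
    have hMM := hap (fun _ => u) (fun _ => v) (fun _ => c) (fun _ => c) key
    calc u = S.M (fun _ => u) := (S.idem u).symm
      _ = S.M (fun _ => v) := hMM
      _ = v := S.idem v
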